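/- arXiv:1707.05139 — 2 statements merged into one kernel-verified Lean document; each statement's English description precedes it below -/
import Mathlib

section
/- Let μ be a nontrivial nonnegative Borel measure on ℂ which is doubling with constant C > 0. Then for every z ∈ ℂ and every r > 0 one has μ(D(z, 2r)) ≥ (1 + C⁻³) · μ(D(z, r)). -/
open MeasureTheory

/-- If `μ` is a nontrivial nonnegative Borel measure on `ℂ` which is
doubling with constant `C > 0` (i.e. `μ(D(z,r)) ≤ C·μ(D(z,r/2))` for all `z` and `r > 0`),
then `μ(D(z,2r)) ≥ (1 + C⁻³)·μ(D(z,r))` for every `z ∈ ℂ` and every `r > 0`. -/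
theorem doubling_lower_growth (μ : Measure ℂ) (hμ : μ ≠ 0) (C : ℝ) (hC : 0 < C)
    (hdoubling : ∀ (z : ℂ) (r : ℝ), 0 < r →
      μ (Metric.ball z r) ≤ ENNReal.ofReal C * μ (Metric.ball z (r / 2))) :
    ∀ (z : ℂ) (r : ℝ), 0 < r →
      ENNReal.ofReal (1 + C⁻¹ ^ 3) * μ (Metric.ball z r) ≤ μ (Metric.ball z (2 * r)) := by
  intro z r hr
  set w : ℂ := z + ((3 * r / 2 : ℝ) : ℂ) with hw
  have hdw : dist w z = 3 * r / 2 := by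
    rw [Complex.dist_eq]
    have : w - z = ((3 * r / 2 : ℝ) : ℂ) := by rw [hw]; ring
    rw [this, Complex.norm_real, Real.norm_eq_abs, abs_of_pos (by linarith)]
  -- three doublings: μ(ball z r) ≤ C³ μ(ball w (r/2))
  have h1 : Metric.ball z r ⊆ Metric.ball w (4 * r) := by
    intro x hx
    rw [Metric.mem_ball] at hx ⊢
    calc dist x w ≤ dist x z + dist z w := dist_triangle _ _ _
      _ = dist x z + 3 * r / 2 := by rw [dist_comm z w, hdw]
      _ < 4 * r := by linarith
  have hd1 := hdoubling w (4 * r) (by linarith)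
  have hd2 := hdoubling w (2 * r) (by linarith)
  have hd3 := hdoubling w r hr
  have e1 : (4 * r) / 2 = 2 * r := by ring
  have e2 : (2 * r) / 2 = r := by ring
  rw [e1] at hd1
  rw [e2] at hd2
  have hkey : μ (Metric.ball z r) ≤ ENNReal.ofReal (C ^ 3) * μ (Metric.ball w (r / 2)) := by
    calc μ (Metric.ball z r) ≤ μ (Metric.ball w (4 * r)) := measure_mono h1
      _ ≤ ENNReal.ofReal C * μ (Metric.ball w (2 * r)) := hd1
      _ ≤ ENNReal.ofReal C * (ENNReal.ofReal C * μ (Metric.ball w r)) := by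
          exact mul_le_mul_right hd2 _
      _ ≤ ENNReal.ofReal C * (ENNReal.ofReal C * (ENNReal.ofReal C * μ (Metric.ball w (r / 2)))) := by
          exact mul_le_mul_right (mul_le_mul_right hd3 _) _
      _ = ENNReal.ofReal (C ^ 3) * μ (Metric.ball w (r / 2)) := by
          rw [← mul_assoc, ← mul_assoc, ← ENNReal.ofReal_mul hC.le,
            ← ENNReal.ofReal_mul (by positivity)]
          ring_nf
  have hkey2 : ENNReal.ofReal (C⁻¹ ^ 3) * μ (Metric.ball z r) ≤ μ (Metric.ball w (r / 2)) := by
    calc ENNReal.ofReal (C⁻¹ ^ 3) * μ (Metric.ball z r)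
        ≤ ENNReal.ofReal (C⁻¹ ^ 3) * (ENNReal.ofReal (C ^ 3) * μ (Metric.ball w (r / 2))) :=
          mul_le_mul_right hkey _
      _ = (ENNReal.ofReal (C⁻¹ ^ 3) * ENNReal.ofReal (C ^ 3)) * μ (Metric.ball w (r / 2)) := by
          rw [mul_assoc]
      _ = μ (Metric.ball w (r / 2)) := by
          rw [← ENNReal.ofReal_mul (by positivity)]
          have : C⁻¹ ^ 3 * C ^ 3 = 1 := by field_simp
          rw [this, ENNReal.ofReal_one, one_mul]
  -- disjointness and inclusions
  have hdisj : Disjoint (Metric.ball z r) (Metric.ball w (r / 2)) := by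
    rw [Set.disjoint_left]
    intro x hx hx'
    rw [Metric.mem_ball] at hx hx'
    have : dist w z ≤ dist w x + dist x z := dist_triangle _ _ _
    rw [hdw, dist_comm w x] at this
    linarith
  have hsub1 : Metric.ball z r ⊆ Metric.ball z (2 * r) :=
    Metric.ball_subset_ball (by linarith)
  have hsub2 : Metric.ball w (r / 2) ⊆ Metric.ball z (2 * r) := by
    intro x hx
    rw [Metric.mem_ball] at hx ⊢
    calc dist x z ≤ dist x w + dist w z := dist_triangle _ _ _
      _ < r / 2 + 3 * r / 2 := by rw [hdw]; linarith
      _ = 2 * r := by ring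
  have hunion : μ (Metric.ball z r) + μ (Metric.ball w (r / 2)) ≤ μ (Metric.ball z (2 * r)) := by
    rw [← measure_union hdisj measurableSet_ball]
    exact measure_mono (Set.union_subset hsub1 hsub2)
  calc ENNReal.ofReal (1 + C⁻¹ ^ 3) * μ (Metric.ball z r)
      = μ (Metric.ball z r) + ENNReal.ofReal (C⁻¹ ^ 3) * μ (Metric.ball z r) := by
        rw [ENNReal.ofReal_add zero_le_one (by positivity), ENNReal.ofReal_one, add_mul, one_mul]
    _ ≤ μ (Metric.ball z r) + μ (Metric.ball w (r / 2)) := add_le_add_right hkey2 _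
    _ ≤ μ (Metric.ball z (2 * r)) := hunion
end

section
/- Let φ : ℂⁿ → ℝ be of class C² and let g : ℂⁿ → ℂ be of class C². Set h = e^{φ/2}·g. Then pointwise e^{−φ/2} · ( − Σ_{j=1}^n [ ∂/∂z_j (∂h/∂z̄_j) − (∂φ/∂z_j)(∂h/∂z̄_j) ] ) = ¼ ( −Δ_A g − V·g ), where Δ_A g = Σ_{j=1}^n [(−∂/∂x_j − (i/2) ∂φ/∂y_j)² + (−∂/∂y_j + (i/2) ∂φ/∂x_j)²] g and V = ½ Δφ. -/
open MeasureTheory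

/-- Partial derivative `∂f/∂x_j` of `f : ℂⁿ → ℂ`, identifying `ℂⁿ ≅ ℝ²ⁿ`, `z_j = x_j + i y_j`. -/
noncomputable def DXc (n : ℕ) (j : Fin n) (f : (Fin n → ℂ) → ℂ) (z : Fin n → ℂ) : ℂ :=
  fderiv ℝ f z (Pi.single j 1)

/-- Partial derivative `∂f/∂y_j` of `f : ℂⁿ → ℂ`. -/
noncomputable def DYc (n : ℕ) (j : Fin n) (f : (Fin n → ℂ) → ℂ) (z : Fin n → ℂ) : ℂ :=
  fderiv ℝ f z (Pi.single j Complex.I)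

/-- Partial derivative `∂φ/∂x_j` of `φ : ℂⁿ → ℝ`. -/
noncomputable def DXr (n : ℕ) (j : Fin n) (φ : (Fin n → ℂ) → ℝ) (z : Fin n → ℂ) : ℝ :=
  fderiv ℝ φ z (Pi.single j 1)

/-- Partial derivative `∂φ/∂y_j` of `φ : ℂⁿ → ℝ`. -/
noncomputable def DYr (n : ℕ) (j : Fin n) (φ : (Fin n → ℂ) → ℝ) (z : Fin n → ℂ) : ℝ :=
  fderiv ℝ φ z (Pi.single j Complex.I)

/-- Wirtinger derivative `∂f/∂z_j = ½(∂f/∂x_j - i ∂f/∂y_j)`. -/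
noncomputable def wdz (n : ℕ) (j : Fin n) (f : (Fin n → ℂ) → ℂ) (z : Fin n → ℂ) : ℂ :=
  (1 / 2) * (DXc n j f z - Complex.I * DYc n j f z)

/-- Wirtinger derivative `∂f/∂z̄_j = ½(∂f/∂x_j + i ∂f/∂y_j)`. -/
noncomputable def wdzb (n : ℕ) (j : Fin n) (f : (Fin n → ℂ) → ℂ) (z : Fin n → ℂ) : ℂ :=
  (1 / 2) * (DXc n j f z + Complex.I * DYc n j f z)

/-- The operator `(-∂/∂x_j - (i/2) ∂φ/∂y_j)` appearing in the magnetic Laplacian. -/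
noncomputable def opM1 (n : ℕ) (φ : (Fin n → ℂ) → ℝ) (j : Fin n)
    (v : (Fin n → ℂ) → ℂ) : (Fin n → ℂ) → ℂ :=
  fun z => -(DXc n j v z) - (Complex.I / 2) * (DYr n j φ z : ℂ) * v z

/-- The operator `(-∂/∂y_j + (i/2) ∂φ/∂x_j)` appearing in the magnetic Laplacian. -/
noncomputable def opM2 (n : ℕ) (φ : (Fin n → ℂ) → ℝ) (j : Fin n)
    (v : (Fin n → ℂ) → ℂ) : (Fin n → ℂ) → ℂ :=
  fun z => -(DYc n j v z) + (Complex.I / 2) * (DXr n j φ z : ℂ) * v z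

/-- The magnetic Laplacian
`Δ_A = Σ_j [(-∂/∂x_j - (i/2)∂φ/∂y_j)² + (-∂/∂y_j + (i/2)∂φ/∂x_j)²]`. -/
noncomputable def lapA (n : ℕ) (φ : (Fin n → ℂ) → ℝ) (g : (Fin n → ℂ) → ℂ)
    (z : Fin n → ℂ) : ℂ :=
  ∑ j, (opM1 n φ j (opM1 n φ j g) z + opM2 n φ j (opM2 n φ j g) z)

/-- The Laplacian `Δφ = Σ_j (∂²φ/∂x_j² + ∂²φ/∂y_j²)` of `φ : ℂⁿ → ℝ`. -/
noncomputable def lapR (n : ℕ) (φ : (Fin n → ℂ) → ℝ) (z : Fin n → ℂ) : ℝ :=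
  ∑ j, (DXr n j (fun w => DXr n j φ w) z + DYr n j (fun w => DYr n j φ w) z)

/-- The electric potential `V = ½ Δφ`. -/
noncomputable def potV (n : ℕ) (φ : (Fin n → ℂ) → ℝ) (z : Fin n → ℂ) : ℝ :=
  (1 / 2) * lapR n φ z

section helpers
variable {n : ℕ}

lemma d_mul {f₁ f₂ : (Fin n → ℂ) → ℂ} {z v : Fin n → ℂ}
    (h₁ : DifferentiableAt ℝ f₁ z) (h₂ : DifferentiableAt ℝ f₂ z) :
    fderiv ℝ (fun w => f₁ w * f₂ w) z v
      = fderiv ℝ f₁ z v * f₂ z + f₁ z * fderiv ℝ f₂ z v := by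
  rw [fderiv_fun_mul h₁ h₂]
  simp [smul_eq_mul]; ring

lemma d_add {f₁ f₂ : (Fin n → ℂ) → ℂ} {z v : Fin n → ℂ}
    (h₁ : DifferentiableAt ℝ f₁ z) (h₂ : DifferentiableAt ℝ f₂ z) :
    fderiv ℝ (fun w => f₁ w + f₂ w) z v = fderiv ℝ f₁ z v + fderiv ℝ f₂ z v := by
  rw [fderiv_fun_add h₁ h₂]; simp

lemma d_sub {f₁ f₂ : (Fin n → ℂ) → ℂ} {z v : Fin n → ℂ}
    (h₁ : DifferentiableAt ℝ f₁ z) (h₂ : DifferentiableAt ℝ f₂ z) :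
    fderiv ℝ (fun w => f₁ w - f₂ w) z v = fderiv ℝ f₁ z v - fderiv ℝ f₂ z v := by
  rw [fderiv_fun_sub h₁ h₂]; simp

lemma d_neg {f : (Fin n → ℂ) → ℂ} {z v : Fin n → ℂ} :
    fderiv ℝ (fun w => -(f w)) z v = -(fderiv ℝ f z v) := by
  rw [fderiv_fun_neg]; simp

lemma d_const_mul {f : (Fin n → ℂ) → ℂ} {z v : Fin n → ℂ}
    (h : DifferentiableAt ℝ f z) (c : ℂ) :
    fderiv ℝ (fun w => c * f w) z v = c * fderiv ℝ f z v := by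
  rw [fderiv_const_mul h c]; simp

lemma d_div_const {f : (Fin n → ℂ) → ℂ} {z v : Fin n → ℂ}
    (h : DifferentiableAt ℝ f z) (c : ℂ) :
    fderiv ℝ (fun w => f w / c) z v = fderiv ℝ f z v / c := by
  simp only [div_eq_inv_mul]
  exact d_const_mul h c⁻¹

lemma dAt_div_const {f : (Fin n → ℂ) → ℂ} {z : Fin n → ℂ}
    (h : DifferentiableAt ℝ f z) (c : ℂ) :
    DifferentiableAt ℝ (fun w => f w / c) z := by
  simp only [div_eq_mul_inv]
  exact h.mul_const c⁻¹

lemma d_exp {f : (Fin n → ℂ) → ℂ} {z v : Fin n → ℂ}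
    (h : DifferentiableAt ℝ f z) :
    fderiv ℝ (fun w => Complex.exp (f w)) z v = Complex.exp (f z) * fderiv ℝ f z v := by
  rw [h.hasFDerivAt.cexp.fderiv]; simp

lemma d_ofReal {φ : (Fin n → ℂ) → ℝ} {z v : Fin n → ℂ}
    (hφ : DifferentiableAt ℝ φ z) :
    fderiv ℝ (fun w => ((φ w : ℝ) : ℂ)) z v = ((fderiv ℝ φ z v : ℝ) : ℂ) := by
  have h1 : HasFDerivAt (fun w => ((φ w : ℝ) : ℂ))
      (Complex.ofRealCLM.comp (fderiv ℝ φ z)) z :=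
    Complex.ofRealCLM.hasFDerivAt.comp z hφ.hasFDerivAt
  rw [h1.fderiv]; rfl

lemma cd_fderiv_apply {F : Type*} [NormedAddCommGroup F] [NormedSpace ℝ F]
    {f : (Fin n → ℂ) → F} (hf : ContDiff ℝ 2 f) (v : Fin n → ℂ) :
    ContDiff ℝ 1 (fun w => fderiv ℝ f w v) :=
  (hf.fderiv_right (by norm_num)).clm_apply contDiff_const

end helpers

lemma key (n : ℕ) (φ : (Fin n → ℂ) → ℝ) (hφ : ContDiff ℝ 2 φ)
    (g : (Fin n → ℂ) → ℂ) (hg : ContDiff ℝ 2 g) (j : Fin n) (z : Fin n → ℂ) :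
    Complex.exp (-(φ z : ℂ) / 2) *
        (-(wdz n j (fun w => wdzb n j (fun z => Complex.exp ((φ z : ℂ) / 2) * g z) w) z
          - wdz n j (fun w => ((φ w : ℝ) : ℂ)) z
              * wdzb n j (fun z => Complex.exp ((φ z : ℂ) / 2) * g z) z))
      = (1 / 4) * (-(opM1 n φ j (opM1 n φ j g) z + opM2 n φ j (opM2 n φ j g) z)
          - (1 / 2) * (((DXr n j (fun w => DXr n j φ w) z : ℝ) : ℂ)
              + ((DYr n j (fun w => DYr n j φ w) z : ℝ) : ℂ)) * g z) := by
  have hφC : ContDiff ℝ 2 (fun w => ((φ w : ℝ) : ℂ)) :=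
    Complex.ofRealCLM.contDiff.comp hφ
  have hE : ContDiff ℝ 2 (fun w => Complex.exp ((φ w : ℂ) / 2)) := (hφC.div_const 2).cexp
  have hH2 : ContDiff ℝ 2 (fun w => Complex.exp ((φ w : ℂ) / 2) * g w) := hE.mul hg
  have dφ : ∀ w, DifferentiableAt ℝ φ w := fun w =>
    (hφ.differentiable two_ne_zero).differentiableAt
  have dφC : ∀ w, DifferentiableAt ℝ (fun w => ((φ w : ℝ) : ℂ)) w := fun w =>
    (hφC.differentiable two_ne_zero).differentiableAt
  have dE : ∀ w, DifferentiableAt ℝ (fun w => Complex.exp ((φ w : ℂ) / 2)) w := fun w =>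
    (hE.differentiable two_ne_zero).differentiableAt
  have dg : ∀ w, DifferentiableAt ℝ g w := fun w =>
    (hg.differentiable two_ne_zero).differentiableAt
  have dφv : ∀ v, DifferentiableAt ℝ (fun w => fderiv ℝ φ w v) z := fun v =>
    (((cd_fderiv_apply hφ v).differentiable one_ne_zero) z)
  have dφvC : ∀ v, DifferentiableAt ℝ (fun w => ((fderiv ℝ φ w v : ℝ) : ℂ)) z := fun v =>
    (Complex.ofRealCLM.differentiable.comp ((cd_fderiv_apply hφ v).differentiable one_ne_zero)) z
  have dgv : ∀ v, DifferentiableAt ℝ (fun w => fderiv ℝ g w v) z := fun v =>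
    (((cd_fderiv_apply hg v).differentiable one_ne_zero) z)
  have dHv : ∀ v, DifferentiableAt ℝ
      (fun w => fderiv ℝ (fun w => Complex.exp ((φ w : ℂ) / 2) * g w) w v) z := fun v =>
    (((cd_fderiv_apply hH2 v).differentiable one_ne_zero) z)
  -- Step 1 : first derivatives of H
  have s1 : ∀ (v w : Fin n → ℂ),
      fderiv ℝ (fun w => Complex.exp ((φ w : ℂ) / 2) * g w) w v
        = Complex.exp ((φ w : ℂ) / 2)
            * (((fderiv ℝ φ w v : ℝ) : ℂ) / 2 * g w + fderiv ℝ g w v) := by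
    intro v w
    rw [d_mul (dE w) (dg w), d_exp (dAt_div_const (dφC w) 2), d_div_const (dφC w) 2,
      d_ofReal (dφ w)]
    ring
  -- Step 2 : second derivatives of H
  have s2 : ∀ (u v : Fin n → ℂ),
      fderiv ℝ (fun w => fderiv ℝ (fun w => Complex.exp ((φ w : ℂ) / 2) * g w) w v) z u
        = Complex.exp ((φ z : ℂ) / 2) *
            (((fderiv ℝ φ z u : ℝ) : ℂ) / 2
                * (((fderiv ℝ φ z v : ℝ) : ℂ) / 2 * g z + fderiv ℝ g z v)
              + (((fderiv ℝ (fun w => fderiv ℝ φ w v) z u : ℝ) : ℂ) / 2 * g z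
                + ((fderiv ℝ φ z v : ℝ) : ℂ) / 2 * fderiv ℝ g z u
                + fderiv ℝ (fun w => fderiv ℝ g w v) z u)) := by
    intro u v
    have hfun : (fun w => fderiv ℝ (fun w => Complex.exp ((φ w : ℂ) / 2) * g w) w v)
        = fun w => Complex.exp ((φ w : ℂ) / 2)
            * (((fderiv ℝ φ w v : ℝ) : ℂ) / 2 * g w + fderiv ℝ g w v) := funext (s1 v)
    rw [hfun]
    have dQ : DifferentiableAt ℝ
        (fun w => ((fderiv ℝ φ w v : ℝ) : ℂ) / 2 * g w + fderiv ℝ g w v) z :=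
      ((dAt_div_const (dφvC v) 2).mul (dg z)).add (dgv v)
    rw [d_mul (dE z) dQ, d_exp (dAt_div_const (dφC z) 2), d_div_const (dφC z) 2, d_ofReal (dφ z),
      d_add ((dAt_div_const (dφvC v) 2).fun_mul (dg z)) (dgv v),
      d_mul (dAt_div_const (dφvC v) 2) (dg z), d_div_const (dφvC v) 2, d_ofReal (dφv v)]
    ring
  -- Clairaut for g
  have hfdg : DifferentiableAt ℝ (fderiv ℝ g) z :=
    ((hg.fderiv_right (by norm_num)).differentiable one_ne_zero) z
  have swap : ∀ u v : Fin n → ℂ,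
      fderiv ℝ (fun w => fderiv ℝ g w v) z u = fderiv ℝ (fderiv ℝ g) z u v := by
    intro u v
    rw [fderiv_clm_apply hfdg (differentiableAt_const v)]
    simp
  have clair : fderiv ℝ (fun w => fderiv ℝ g w (Pi.single j Complex.I)) z (Pi.single j 1)
      = fderiv ℝ (fun w => fderiv ℝ g w (Pi.single j (1 : ℂ))) z (Pi.single j Complex.I) := by
    rw [swap, swap]
    exact (hg.contDiffAt.isSymmSndFDerivAt (by simp)) _ _
  -- derivative of the wdzb function
  have dwb : ∀ u : Fin n → ℂ,
      fderiv ℝ (fun w => 1 / 2 *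
          (fderiv ℝ (fun w => Complex.exp ((φ w : ℂ) / 2) * g w) w (Pi.single j 1)
            + Complex.I *
              fderiv ℝ (fun w => Complex.exp ((φ w : ℂ) / 2) * g w) w (Pi.single j Complex.I))) z u
        = 1 / 2 *
            (fderiv ℝ (fun w => fderiv ℝ (fun w => Complex.exp ((φ w : ℂ) / 2) * g w) w
                (Pi.single j 1)) z u
              + Complex.I * fderiv ℝ (fun w => fderiv ℝ (fun w => Complex.exp ((φ w : ℂ) / 2) * g w) w
                (Pi.single j Complex.I)) z u) := by
    intro u
    rw [d_const_mul ((dHv _).fun_add ((dHv _).const_mul _)),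
      d_add (dHv _) ((dHv _).const_mul _), d_const_mul (dHv _)]
  -- derivatives of the opM inner functions
  have dop1 : fderiv ℝ (fun w => -(fderiv ℝ g w (Pi.single j 1))
        - Complex.I / 2 * ((fderiv ℝ φ w (Pi.single j Complex.I) : ℝ) : ℂ) * g w) z
        (Pi.single j 1)
      = -(fderiv ℝ (fun w => fderiv ℝ g w (Pi.single j (1:ℂ))) z (Pi.single j 1))
        - (Complex.I / 2 *
            ((fderiv ℝ (fun w => fderiv ℝ φ w (Pi.single j Complex.I)) z (Pi.single j 1) : ℝ) : ℂ)
              * g z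
          + Complex.I / 2 * ((fderiv ℝ φ z (Pi.single j Complex.I) : ℝ) : ℂ)
              * fderiv ℝ g z (Pi.single j 1)) := by
    rw [d_sub (dgv _).fun_neg (((dφvC _).const_mul _).fun_mul (dg z)), d_neg,
      d_mul ((dφvC _).const_mul _) (dg z), d_const_mul (dφvC _), d_ofReal (dφv _)]
  have dop2 : fderiv ℝ (fun w => -(fderiv ℝ g w (Pi.single j Complex.I))
        + Complex.I / 2 * ((fderiv ℝ φ w (Pi.single j 1) : ℝ) : ℂ) * g w) z
        (Pi.single j Complex.I)
      = -(fderiv ℝ (fun w => fderiv ℝ g w (Pi.single j Complex.I)) z (Pi.single j Complex.I))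
        + (Complex.I / 2 *
            ((fderiv ℝ (fun w => fderiv ℝ φ w (Pi.single j (1:ℂ))) z (Pi.single j Complex.I) : ℝ) : ℂ)
              * g z
          + Complex.I / 2 * ((fderiv ℝ φ z (Pi.single j 1) : ℝ) : ℂ)
              * fderiv ℝ g z (Pi.single j Complex.I)) := by
    rw [d_add (dgv _).fun_neg (((dφvC _).const_mul _).fun_mul (dg z)), d_neg,
      d_mul ((dφvC _).const_mul _) (dg z), d_const_mul (dφvC _), d_ofReal (dφv _)]
  have ho1 : opM1 n φ j g = fun w => -(fderiv ℝ g w (Pi.single j 1))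
      - Complex.I / 2 * ((fderiv ℝ φ w (Pi.single j Complex.I) : ℝ) : ℂ) * g w := rfl
  have ho2 : opM2 n φ j g = fun w => -(fderiv ℝ g w (Pi.single j Complex.I))
      + Complex.I / 2 * ((fderiv ℝ φ w (Pi.single j 1) : ℝ) : ℂ) * g w := rfl
  rw [ho1, ho2]
  simp only [wdz, wdzb, opM1, opM2, DXc, DYc, DXr, DYr]
  rw [dwb, dwb, s2, s2, s2, s2, dop1, dop2, s1, s1, d_ofReal (dφ z), d_ofReal (dφ z)]
  rw [neg_div, Complex.exp_neg, inv_mul_eq_iff_eq_mul₀ (Complex.exp_ne_zero _)]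
  rw [clair]
  ring_nf
  simp only [Complex.I_sq]
  ring

/-- Let `φ : ℂⁿ → ℝ` and `g : ℂⁿ → ℂ` be of class `C²`, and set
`h = e^{φ/2}·g`. Then pointwise
`e^{-φ/2}·(-Σ_j [∂/∂z_j(∂h/∂z̄_j) - (∂φ/∂z_j)(∂h/∂z̄_j)]) = ¼(-Δ_A g - V·g)`,
where `V = ½Δφ`. -/
theorem conjugated_box00_eq_pauli_minus
    (n : ℕ) (φ : (Fin n → ℂ) → ℝ) (hφ : ContDiff ℝ 2 φ)
    (g : (Fin n → ℂ) → ℂ) (hg : ContDiff ℝ 2 g)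
    (h : (Fin n → ℂ) → ℂ) (hh : h = fun z => Complex.exp ((φ z : ℂ) / 2) * g z) :
    ∀ z, Complex.exp (-(φ z : ℂ) / 2) *
        (-(∑ j, (wdz n j (fun w => wdzb n j h w) z
          - wdz n j (fun w => ((φ w : ℝ) : ℂ)) z * wdzb n j h z)))
      = (1 / 4) * (-(lapA n φ g z) - (potV n φ z : ℂ) * g z) := by
  intro z
  subst hh
  simp only [lapA, potV, lapR]
  push_cast
  rw [← Finset.sum_neg_distrib, Finset.mul_sum, Finset.mul_sum, Finset.sum_mul,
    ← Finset.sum_neg_distrib, ← Finset.sum_sub_distrib, Finset.mul_sum]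
  refine Finset.sum_congr rfl fun j _ => ?_
  exact key n φ hφ g hg j z
end
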